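/- Proposition (the structure category is left-Ore): Let σ be an involutive non-degenerate quiver-theoretic Yang–Baxter map on a quiver 𝒜, and let C(σ) be its structure category. Then C(σ) is right-cancellative (x ≫ f = y ≫ f implies x = y whenever the compositions are defined), and any two morphisms f, g of C(σ) with the same target admit a left-lcm: there exist a morphism m and morphisms u, v with m = u ≫ f = v ≫ g such that for every common left-multiple z (z = u' ≫ f = v' ≫ g for some u', v') there exists w with z = w ≫ m. In particular C(σ), being also left-cancellative, is a left-Ore category. -/

import Mathlib

/-!
Theorem (embedding of the quiver into the structure category):
For an involutive left-non-degenerate quiver-theoretic Yang–Baxter map `σ` on a quiver `𝒜`,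
the canonical map `j : 𝒜 → C(σ)` into the structure category is injective.
-/

open CategoryTheory

universe u v

/-- A quiver over `Λ` with arrows `A`: source and target maps. -/
structure QuiverData (Λ : Type u) (A : Type v) where
  src : A → Λ
  tgt : A → Λ

namespace QuiverData

variable {Λ : Type u} {A : Type v}

/-- The type of vertices, carrying the quiver structure whose arrows from `a` to `b`
are the elements `x : A` with `src x = a` and `tgt x = b`. -/
def V (_Q : QuiverData Λ A) : Type u := Λ

instance (Q : QuiverData Λ A) : Quiver Q.V where
  Hom a b := {x : A // Q.src x = a ∧ Q.tgt x = b}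

def vert (Q : QuiverData Λ A) (l : Λ) : Q.V := l

/-- The arrow of the quiver `Q.V` corresponding to `x : A`. -/
def arr (Q : QuiverData Λ A) (x : A) {a b : Λ}
    (ha : Q.src x = a) (hb : Q.tgt x = b) : Q.vert a ⟶ Q.vert b :=
  ⟨x, ha, hb⟩

/-- The length-two path `x|y` in the path category. -/
def path2 (Q : QuiverData Λ A) {a m b : Λ} (x y : A)
    (hx : Q.src x = a) (hx' : Q.tgt x = m) (hy : Q.src y = m) (hy' : Q.tgt y = b) :
    (Paths.of Q.V).obj (Q.vert a) ⟶ (Paths.of Q.V).obj (Q.vert b) :=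
  (Paths.of Q.V).map (Q.arr x hx hx') ≫ (Paths.of Q.V).map (Q.arr y hy hy')

/-- The relation `x|y ∼ (x ⇀ y)|(x ↼ y)` on the path category, where `hd = ⇀`, `tl = ↼`. -/
inductive ybRel (Q : QuiverData Λ A) (hd tl : A → A → A) :
    ∀ ⦃X Y : Paths Q.V⦄, (X ⟶ Y) → (X ⟶ Y) → Prop
  | mk (x y : A) (hxy : Q.tgt x = Q.src y)
      (h1 : Q.src (hd x y) = Q.src x)
      (h2 : Q.tgt (hd x y) = Q.src (tl x y))
      (h3 : Q.tgt (tl x y) = Q.tgt y) :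
      ybRel Q hd tl (Q.path2 x y rfl rfl hxy.symm rfl)
        (Q.path2 (hd x y) (tl x y) h1 rfl h2.symm h3)

/-- The structure category `C(σ)`: the quotient of the path category by the congruence
generated by `x|y ∼ (x ⇀ y)|(x ↼ y)`. -/
abbrev SC (Q : QuiverData Λ A) (hd tl : A → A → A) :=
  CategoryTheory.Quotient (Q.ybRel hd tl)

instance (Q : QuiverData Λ A) (hd tl : A → A → A) :
    Category (CategoryTheory.Quotient (Q.ybRel hd tl)) :=
  CategoryTheory.Quotient.category _

/-- The canonical map `j` from arrows of the quiver to morphisms of the structure category. -/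
def jmap (Q : QuiverData Λ A) (hd tl : A → A → A) (x : A) {a b : Λ}
    (ha : Q.src x = a) (hb : Q.tgt x = b) :
    (Quotient.functor (Q.ybRel hd tl)).obj ((Paths.of Q.V).obj (Q.vert a)) ⟶
      (Quotient.functor (Q.ybRel hd tl)).obj ((Paths.of Q.V).obj (Q.vert b)) :=
  (Quotient.functor (Q.ybRel hd tl)).map ((Paths.of Q.V).map (Q.arr x ha hb))

end QuiverData

instance (Q : QuiverData Λ A) (hd tl : A → A → A) :
    (Quotient.functor (Q.ybRel hd tl)).Full :=
  Quotient.full_functor _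

namespace YBW

open Relation

variable {Λ : Type u} {A : Type v}

/-- Composable words, target-first: `IsW S T t l s` means `l` is a composable word
from `s` to `t`, listed with the target-most arrow first. -/
inductive IsW (S T : A → Λ) : Λ → List A → Λ → Prop
  | nil (a : Λ) : IsW S T a [] a
  | cons {b a : Λ} {l : List A} (x : A) (h1 : T x = b) (h2 : IsW S T (S x) l a) :
      IsW S T b (x :: l) a

theorem IsW.nil_eq {S T : A → Λ} {t s : Λ} (h : IsW S T t [] s) : t = s := by
  cases h; rfl

theorem IsW.cons_tgt {S T : A → Λ} {t s : Λ} {x : A} {l : List A}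
    (h : IsW S T t (x :: l) s) : T x = t := by cases h; assumption

theorem IsW.cons_tail {S T : A → Λ} {t s : Λ} {x : A} {l : List A}
    (h : IsW S T t (x :: l) s) : IsW S T (S x) l s := by cases h; assumption

theorem IsW.append {S T : A → Λ} {t m s : Λ} {l₁ l₂ : List A}
    (h1 : IsW S T t l₁ m) (h2 : IsW S T m l₂ s) : IsW S T t (l₁ ++ l₂) s := by
  induction h1 with
  | nil => exact h2
  | cons x hx _ ih => exact IsW.cons x hx (ih h2)

theorem IsW.append_split {S T : A → Λ} {t s : Λ} {l₁ l₂ : List A}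
    (h : IsW S T t (l₁ ++ l₂) s) : ∃ m, IsW S T t l₁ m ∧ IsW S T m l₂ s := by
  induction l₁ generalizing t with
  | nil => exact ⟨t, IsW.nil t, h⟩
  | cons x l ih =>
    obtain ⟨m, h1, h2⟩ := ih h.cons_tail
    exact ⟨m, IsW.cons x h.cons_tgt h1, h2⟩

theorem IsW.src_unique {S T : A → Λ} {t s s' : Λ} {l : List A}
    (h : IsW S T t l s) (h' : IsW S T t l s') : s = s' := by
  induction l generalizing t with
  | nil => rw [← h.nil_eq, ← h'.nil_eq]
  | cons x l ih => exact ih h.cons_tail h'.cons_tail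

/-- One rewriting step: `x|y ↦ (x ⇀ y)|(x ↼ y)` in context (target-first lists). -/
inductive Rel (S T : A → Λ) (hd tl : A → A → A) : List A → List A → Prop
  | mk (p s : List A) (x y : A) (h : T x = S y) :
      Rel S T hd tl (p ++ y :: x :: s) (p ++ tl x y :: hd x y :: s)

section Ctx

variable {S T : A → Λ} {hd tl comp : A → A → A}

/-- All the hypotheses needed for the one-sided word calculus. -/
structure Ctx (S T : A → Λ) (hd tl comp : A → A → A) : Prop where
  hs : ∀ x y, T x = S y → S (hd x y) = S x
  hm : ∀ x y, T x = S y → T (hd x y) = S (tl x y)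
  ht : ∀ x y, T x = S y → T (tl x y) = T y
  yb3 : ∀ x y z, T x = S y → T y = S z →
    tl (tl x y) z = tl (tl x (hd y z)) (tl y z)
  inv1 : ∀ x y, T x = S y → hd (hd x y) (tl x y) = x
  inv2 : ∀ x y, T x = S y → tl (hd x y) (tl x y) = y
  ctl : ∀ f g, T f = T g → tl (comp f g) g = f
  ctgt : ∀ f g, T f = T g → T (comp f g) = S g
  cuniq : ∀ f g c, T f = T g → T c = S g → tl c g = f → c = comp f g

variable (C : Ctx S T hd tl comp)
include C

theorem Ctx.rel_symm {l l' : List A} (h : Rel S T hd tl l l') : Rel S T hd tl l' l := by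
  obtain ⟨p, s, x, y, hxy⟩ := h
  have h' : T (hd x y) = S (tl x y) := C.hm x y hxy
  have := Rel.mk (S := S) (T := T) (hd := hd) (tl := tl) p s (hd x y) (tl x y) h'
  rwa [C.inv1 x y hxy, C.inv2 x y hxy] at this

theorem Ctx.rel_isW {t a : Λ} {l l' : List A} (h : Rel S T hd tl l l')
    (hw : IsW S T t l a) : IsW S T t l' a := by
  obtain ⟨p, s, x, y, hxy⟩ := h
  obtain ⟨m, hp, hr⟩ := hw.append_split
  refine hp.append ?_
  have hy : T y = m := hr.cons_tgt
  have hx : IsW S T (S y) (x :: s) a := hr.cons_tail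
  have hs' : IsW S T (S x) s a := hx.cons_tail
  refine IsW.cons _ (by rw [C.ht x y hxy, hy]) (IsW.cons _ (C.hm x y hxy) ?_)
  rwa [C.hs x y hxy]

theorem Ctx.chd {f g : A} (h : T f = T g) : hd (comp f g) g = comp g f := by
  refine C.cuniq g f _ h.symm ?_ ?_
  · rw [C.hm (comp f g) g (C.ctgt f g h), C.ctl f g h]
  · have := C.inv2 (comp f g) g (C.ctgt f g h)
    rwa [C.ctl f g h] at this

theorem Ctx.csrc {f g : A} (h : T f = T g) : S (comp f g) = S (comp g f) := by
  have := C.hs (comp f g) g (C.ctgt f g h)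
  rw [C.chd h] at this
  exact this.symm

theorem Ctx.cinj {f g f' : A} (h : T f = T g) (h' : T f' = T g)
    (e : comp f g = comp f' g) : f = f' := by
  have h1 := C.ctl f g h
  have h2 := C.ctl f' g h'
  rw [e, h2] at h1
  exact h1.symm

/-- The fundamental cube identity for the complement, from (YB3) and involutivity. -/
theorem Ctx.ccube {x y z : A} {t : Λ} (hx : T x = t) (hy : T y = t) (hz : T z = t) :
    comp (comp x y) (comp z y) = comp (comp x z) (comp y z) := by
  have hxz : T x = T z := hx.trans hz.symm
  have hyz : T y = T z := hy.trans hz.symm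
  have hxy : T x = T y := hx.trans hy.symm
  have hzy : T z = T y := hz.trans hy.symm
  set a := comp y z with ha
  set b := comp x z with hb
  have hTa : T a = S z := C.ctgt y z hyz
  have hTb : T b = S z := C.ctgt x z hxz
  have hab : T b = T a := hTb.trans hTa.symm
  set c := comp b a with hc
  have hTc : T c = S a := C.ctgt b a hab
  have hca : tl c a = b := C.ctl b a hab
  -- yb3 on (c, a, z)
  have hyb := C.yb3 c a z hTc hTa
  rw [hca, C.ctl x z hxz, C.chd hyz, C.ctl y z hyz] at hyb
  -- hyb : x = tl (tl c (comp z y)) y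
  have hsza : S (comp z y) = S a := C.csrc hzy
  have step : tl c (comp z y) = comp x y := by
    refine C.cuniq x y _ hxy ?_ ?_
    · rw [C.ht c (comp z y) (hTc.trans hsza.symm), C.ctgt z y hzy]
    · exact hyb.symm
  refine (C.cuniq (comp x y) (comp z y) c ?_ ?_ step).symm
  · rw [C.ctgt x y hxy, C.ctgt z y hzy]
  · rw [hTc, hsza]

end Ctx

section Res

variable [DecidableEq A] (comp : A → A → A)

/-- `res1 comp u y = u ∖ y`: residue of the word `u` past the single letter `y`. -/
def res1 : List A → A → List A
  | [], _ => []
  | z :: u, y => if z = y then u else comp z y :: res1 u (comp y z)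

/-- `res comp u v = u ∖ v`: residue of the word `u` past the word `v`. -/
def res (u v : List A) : List A := v.foldl (res1 comp) u

@[simp] theorem res1_nil (y : A) : res1 comp [] y = [] := rfl

theorem res1_cons (z : A) (u : List A) (y : A) :
    res1 comp (z :: u) y = if z = y then u else comp z y :: res1 comp u (comp y z) := by
  simp [res1]

@[simp] theorem res1_cons_self (z : A) (u : List A) :
    res1 comp (z :: u) z = u := by simp [res1_cons]

theorem res1_cons_ne {z y : A} (h : z ≠ y) (u : List A) :
    res1 comp (z :: u) y = comp z y :: res1 comp u (comp y z) := by
  simp [res1_cons, h]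

@[simp] theorem res_nil_right (u : List A) : res comp u [] = u := rfl

theorem res_cons_right (u : List A) (y : A) (v : List A) :
    res comp u (y :: v) = res comp (res1 comp u y) v := rfl

@[simp] theorem res_single (u : List A) (y : A) : res comp u [y] = res1 comp u y := rfl

@[simp] theorem res_nil_left (v : List A) : res comp [] v = [] := by
  induction v with
  | nil => rfl
  | cons y v ih => rw [res_cons_right, res1_nil]; exact ih

theorem res_append_right (u v w : List A) :
    res comp u (v ++ w) = res comp (res comp u v) w :=
  List.foldl_append ..

theorem res1_length_le (u : List A) (y : A) : (res1 comp u y).length ≤ u.length := by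
  induction u generalizing y with
  | nil => simp
  | cons z u ih =>
    rw [res1_cons]
    split
    · simp
    · simpa using ih (comp y z)

theorem res_length_le (u v : List A) : (res comp u v).length ≤ u.length := by
  induction v generalizing u with
  | nil => simp
  | cons y v ih =>
    rw [res_cons_right]
    exact (ih _).trans (res1_length_le comp u y)

/-- `I2s`: residue of a word with its target-most letter split off. -/
theorem res_cons_left (y : A) (u w : List A) :
    res comp (y :: u) w = res comp [y] w ++ res comp u (res comp w [y]) := by
  induction w generalizing y u with
  | nil => simp
  | cons z w ih =>
    by_cases h : y = z
    · subst h
      rw [res_cons_right, res1_cons_self, res_cons_right, res_single, res1_cons_self,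
        res_nil_left, List.nil_append, res1_cons_self]
    · calc res comp (y :: u) (z :: w)
          = res comp (comp y z :: res1 comp u (comp z y)) w := by
            rw [res_cons_right, res1_cons_ne comp h]
        _ = res comp [comp y z] w ++
              res comp (res1 comp u (comp z y)) (res comp w [comp y z]) := ih _ _
        _ = res comp [y] (z :: w) ++ res comp u (res comp (z :: w) [y]) := by
            have e1 : res comp [y] (z :: w) = res comp [comp y z] w := by
              rw [res_cons_right, res1_cons_ne comp h, res1_nil]
            have e2 : res comp (z :: w) [y] = comp z y :: res1 comp w (comp y z) := by
              rw [res_single, res1_cons_ne comp (Ne.symm h)]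
            rw [e1, e2, res_cons_right comp u (comp z y), res_single]

/-- `I2`: residue of a concatenation. -/
theorem res_append_left (v₁ v₂ u : List A) :
    res comp (v₁ ++ v₂) u = res comp v₁ u ++ res comp v₂ (res comp u v₁) := by
  induction v₁ generalizing u with
  | nil => simp
  | cons y v₁ ih =>
    calc res comp ((y :: v₁) ++ v₂) u
        = res comp [y] u ++ res comp (v₁ ++ v₂) (res comp u [y]) := res_cons_left ..
      _ = res comp [y] u ++ (res comp v₁ (res comp u [y]) ++
            res comp v₂ (res comp (res comp u [y]) v₁)) := by rw [ih]
      _ = (res comp [y] u ++ res comp v₁ (res comp u [y])) ++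
            res comp v₂ (res comp u (y :: v₁)) := by
            rw [← res_append_right, List.append_assoc]; rfl
      _ = res comp (y :: v₁) u ++ res comp v₂ (res comp u (y :: v₁)) := by
            rw [← res_cons_left]

/-- `I3`: a word divides itself. -/
@[simp] theorem res_self (u : List A) : res comp u u = [] := by
  induction u with
  | nil => rfl
  | cons z u ih => rw [res_cons_right, res1_cons_self]; exact ih

theorem res_prefix (f u : List A) : res comp (f ++ u) f = u := by
  rw [res_append_left, res_self, res_nil_right, List.nil_append]

theorem res_append_both (f x y : List A) :
    res comp (f ++ x) (f ++ y) = res comp x y := by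
  rw [res_append_right, res_prefix]

end Res

section RelLemmas

variable {S T : A → Λ} {hd tl : A → A → A}

theorem Rel.append_left {l l' : List A} (m : List A) (h : Rel S T hd tl l l') :
    Rel S T hd tl (m ++ l) (m ++ l') := by
  obtain ⟨p, s, x, y, hxy⟩ := h
  rw [← List.append_assoc, ← List.append_assoc]
  exact Rel.mk (m ++ p) s x y hxy

theorem Rel.append_right {l l' : List A} (m : List A) (h : Rel S T hd tl l l') :
    Rel S T hd tl (l ++ m) (l' ++ m) := by
  obtain ⟨p, s, x, y, hxy⟩ := h
  rw [List.append_assoc, List.cons_append, List.cons_append, List.append_assoc,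
    List.cons_append, List.cons_append]
  exact Rel.mk p (s ++ m) x y hxy

theorem Rel.dest {l l' : List A} (h : Rel S T hd tl l l') :
    ∃ p s x y, T x = S y ∧ l = p ++ y :: x :: s ∧ l' = p ++ tl x y :: hd x y :: s := by
  obtain ⟨p, s, x, y, hxy⟩ := h
  exact ⟨p, s, x, y, hxy, rfl, rfl⟩

theorem rtg_append_left {l l' : List A} (m : List A)
    (h : ReflTransGen (Rel S T hd tl) l l') :
    ReflTransGen (Rel S T hd tl) (m ++ l) (m ++ l') :=
  ReflTransGen.lift (r := Rel S T hd tl) (m ++ ·) (fun _ _ hr => hr.append_left m) _ _ h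

theorem rtg_append_right {l l' : List A} (m : List A)
    (h : ReflTransGen (Rel S T hd tl) l l') :
    ReflTransGen (Rel S T hd tl) (l ++ m) (l' ++ m) :=
  ReflTransGen.lift (r := Rel S T hd tl) (· ++ m) (fun _ _ hr => hr.append_right m) _ _ h

theorem rtg_append {u u' v v' : List A}
    (h1 : ReflTransGen (Rel S T hd tl) u u') (h2 : ReflTransGen (Rel S T hd tl) v v') :
    ReflTransGen (Rel S T hd tl) (u ++ v) (u' ++ v') :=
  (rtg_append_right v h1).trans (rtg_append_left u' h2)

theorem rtg_cons {x : A} {v v' : List A} (h : ReflTransGen (Rel S T hd tl) v v') :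
    ReflTransGen (Rel S T hd tl) (x :: v) (x :: v') :=
  rtg_append_left [x] h

end RelLemmas

section Main

variable [DecidableEq A] {S T : A → Λ} {hd tl comp : A → A → A}
variable (C : Ctx S T hd tl comp)
include C

/-- Soundness of reversing against a single letter. -/
theorem Ctx.res1_sound {t a : Λ} {u : List A} {y : A}
    (hu : IsW S T t u a) (hy : T y = t) :
    ∃ e, IsW S T a (res comp [y] u) e ∧ IsW S T (S y) (res1 comp u y) e ∧
      ReflTransGen (Rel S T hd tl) (u ++ res comp [y] u) (y :: res1 comp u y) := by
  induction u generalizing t y with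
  | nil =>
    have : t = a := hu.nil_eq
    subst this
    exact ⟨S y, IsW.cons y hy (IsW.nil _), IsW.nil _, ReflTransGen.refl⟩
  | cons z u ih =>
    have hz : T z = t := hu.cons_tgt
    have hzy : T z = T y := hz.trans hy.symm
    by_cases h : z = y
    · subst h
      have key : res comp [z] (z :: u) = [] := by
        rw [res_cons_right, res1_cons_self, res_nil_left]
      rw [key, res1_cons_self, List.append_nil]
      exact ⟨a, IsW.nil a, hu.cons_tail, ReflTransGen.refl⟩
    · have hyz : T (comp y z) = S z := C.ctgt y z hzy.symm
      obtain ⟨e, h1, h2, h3⟩ := ih hu.cons_tail hyz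
      have key : res comp [y] (z :: u) = res comp [comp y z] u := by
        rw [res_cons_right, res1_cons_ne comp (fun hh => h hh.symm), res1_nil]
      rw [key, res1_cons_ne comp h]
      refine ⟨e, h1, IsW.cons _ (C.ctgt z y hzy) (by rwa [C.csrc hzy]), ?_⟩
      have hrel : Rel S T hd tl (z :: comp y z :: res1 comp u (comp y z))
          (y :: comp z y :: res1 comp u (comp y z)) := by
        have := Rel.mk (S := S) (T := T) (hd := hd) (tl := tl)
          [] (res1 comp u (comp y z)) (comp y z) z hyz
        rwa [C.ctl y z hzy.symm, C.chd hzy.symm, List.nil_append, List.nil_append] at this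
      exact (rtg_cons (x := z) h3).trans (ReflTransGen.single hrel)

/-- Soundness of word reversing: `(v∖u)·u ≈ (u∖v)·v`, with endpoint bookkeeping. -/
theorem Ctx.res_sound {t a b : Λ} {u v : List A} (hu : IsW S T t u a) (hv : IsW S T t v b) :
    ∃ e, IsW S T a (res comp v u) e ∧ IsW S T b (res comp u v) e ∧
      ReflTransGen (Rel S T hd tl) (u ++ res comp v u) (v ++ res comp u v) := by
  induction v generalizing u a t with
  | nil =>
    have : t = b := hv.nil_eq
    subst this
    refine ⟨a, by simpa using IsW.nil a, by simpa using hu, ?_⟩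
    simpa using ReflTransGen.refl
  | cons y v ih =>
    have hy : T y = t := hv.cons_tgt
    obtain ⟨e₁, h1, h2, h3⟩ := C.res1_sound (comp := comp) hu hy
    obtain ⟨e, g1, g2, g3⟩ := ih h2 hv.cons_tail
    refine ⟨e, ?_, ?_, ?_⟩
    · rw [res_cons_left]
      exact h1.append (by rw [res_single]; exact g1)
    · rw [res_cons_right]; exact g2
    · have step1 : ReflTransGen (Rel S T hd tl) (u ++ res comp (y :: v) u)
          ((y :: res1 comp u y) ++ res comp v (res1 comp u y)) := by
        rw [res_cons_left, res_single, ← List.append_assoc]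
        exact rtg_append_right _ h3
      have step2 : ReflTransGen (Rel S T hd tl)
          ((y :: res1 comp u y) ++ res comp v (res1 comp u y))
          (y :: (v ++ res comp (res1 comp u y) v)) := rtg_cons (x := y) g3
      have step3 : (y :: (v ++ res comp (res1 comp u y) v)) =
          (y :: v) ++ res comp u (y :: v) := by rw [res_cons_right]; rfl
      exact (step1.trans step2).trans (step3 ▸ ReflTransGen.refl)

theorem Ctx.res_isW {t a b : Λ} {u v : List A} (hu : IsW S T t u a) (hv : IsW S T t v b) :
    ∃ e, IsW S T b (res comp u v) e := by
  obtain ⟨e, _, h, _⟩ := C.res_sound (hd := hd) (tl := tl) hu hv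
  exact ⟨e, h⟩

/-- The cube condition for single letters. -/
theorem Ctx.letter_cube {x y z : A} {t : Λ} (hx : T x = t) (hy : T y = t) (hz : T z = t) :
    res comp (res comp [x] [y]) (res comp [z] [y]) =
      res comp (res comp [x] [z]) (res comp [y] [z]) := by
  have r1 : ∀ (a b : A), a ≠ b → res comp [a] [b] = [comp a b] := fun a b h => by
    rw [res_single, res1_cons_ne comp h, res1_nil]
  by_cases hxy : x = y
  · subst hxy; simp
  by_cases hxz : x = z
  · subst hxz; simp
  by_cases hyz : y = z
  · subst hyz; simp
  · have hne1 : comp x y ≠ comp z y := fun h =>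
      hxz (C.cinj (hx.trans hy.symm) (hz.trans hy.symm) h)
    have hne2 : comp x z ≠ comp y z := fun h =>
      hxy (C.cinj (hx.trans hz.symm) (hy.trans hz.symm) h)
    rw [r1 x y hxy, r1 z y (fun h => hyz h.symm), r1 x z hxz, r1 y z hyz,
      r1 _ _ hne1, r1 _ _ hne2, C.ccube hx hy hz]

/-- The inductive step of the cube condition, splitting the middle word. -/
theorem Ctx.cube_step {n : ℕ}
    (IH : ∀ {u v w : List A} {t a b c : Λ}, u.length + v.length + w.length ≤ n →
      IsW S T t u a → IsW S T t v b → IsW S T t w c →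
      res comp (res comp u v) (res comp w v) = res comp (res comp u w) (res comp v w))
    {u w v₂ : List A} {y : A} {t a b c : Λ} (hne : v₂ ≠ [])
    (hn : u.length + (y :: v₂).length + w.length ≤ n + 1)
    (hu : IsW S T t u a) (hv : IsW S T t (y :: v₂) b) (hw : IsW S T t w c) :
    res comp (res comp u (y :: v₂)) (res comp w (y :: v₂)) =
      res comp (res comp u w) (res comp (y :: v₂) w) := by
  have hy1 : IsW S T t [y] (S y) := IsW.cons y hv.cons_tgt (IsW.nil _)
  obtain ⟨e₁, huy⟩ := C.res_isW (hd := hd) (tl := tl) hu hy1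
  obtain ⟨e₂, hwy⟩ := C.res_isW (hd := hd) (tl := tl) hw hy1
  have l1 := res_length_le comp u [y]
  have l2 := res_length_le comp w [y]
  have hf : 0 < v₂.length := List.length_pos_iff.mpr hne
  have c1 : res comp (res comp (res comp u [y]) v₂) (res comp (res comp w [y]) v₂) =
      res comp (res comp (res comp u [y]) (res comp w [y]))
        (res comp v₂ (res comp w [y])) := by
    refine IH ?_ huy hv.cons_tail hwy
    simp only [List.length_cons, List.length_nil] at hn l1 l2 ⊢
    omega
  have c2 : res comp (res comp u [y]) (res comp w [y]) =
      res comp (res comp u w) (res comp [y] w) := by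
    refine IH ?_ hu hy1 hw
    simp only [List.length_cons, List.length_nil] at hn l1 l2 ⊢
    omega
  calc res comp (res comp u (y :: v₂)) (res comp w (y :: v₂))
      = res comp (res comp (res comp u [y]) v₂) (res comp (res comp w [y]) v₂) := by
        rw [show (y :: v₂) = [y] ++ v₂ from rfl, res_append_right, res_append_right]
    _ = res comp (res comp (res comp u w) (res comp [y] w))
          (res comp v₂ (res comp w [y])) := by rw [c1, c2]
    _ = res comp (res comp u w) (res comp (y :: v₂) w) := by
        rw [show (y :: v₂) = [y] ++ v₂ from rfl, res_append_left, res_append_right]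

/-- The cube condition for words. -/
theorem Ctx.cube (n : ℕ) : ∀ {u v w : List A} {t a b c : Λ},
    u.length + v.length + w.length ≤ n →
    IsW S T t u a → IsW S T t v b → IsW S T t w c →
    res comp (res comp u v) (res comp w v) = res comp (res comp u w) (res comp v w) := by
  induction n with
  | zero =>
    intro u v w t a b c hn _ _ _
    have hu : u = [] := List.eq_nil_of_length_eq_zero (by omega)
    subst hu; simp
  | succ n ih =>
    intro u v w t a b c hn hu hv hw
    rcases u with _ | ⟨x, u₂⟩
    · simp
    rcases v with _ | ⟨y, v₂⟩
    · simp
    rcases w with _ | ⟨z, w₂⟩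
    · simp
    rcases u₂ with _ | ⟨x₂, u₃⟩
    · -- u is a single letter
      rcases v₂ with _ | ⟨y₂, v₃⟩
      · -- v single: use w-split (or letter cube if w single)
        rcases w₂ with _ | ⟨z₂, w₃⟩
        · exact C.letter_cube hu.cons_tgt hv.cons_tgt hw.cons_tgt
        · exact (C.cube_step (fun h h1 h2 h3 => ih h h1 h2 h3) (List.cons_ne_nil z₂ w₃)
            (by simp only [List.length_cons, List.length_nil] at hn ⊢; omega) hu hw hv).symm
      · exact C.cube_step (fun h h1 h2 h3 => ih h h1 h2 h3) (List.cons_ne_nil y₂ v₃)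
          (by simp only [List.length_cons, List.length_nil] at hn ⊢; omega) hu hv hw
    · -- u has length ≥ 2 : split off its target-most letter x
      have hx1 : IsW S T t [x] (S x) := IsW.cons x hu.cons_tgt (IsW.nil _)
      have hu₂ : IsW S T (S x) (x₂ :: u₃) a := hu.cons_tail
      obtain ⟨e₁, hvx⟩ := C.res_isW (hd := hd) (tl := tl) hv hx1
      obtain ⟨e₂, hwx⟩ := C.res_isW (hd := hd) (tl := tl) hw hx1
      have l1 := res_length_le comp (y :: v₂) [x]
      have l2 := res_length_le comp (z :: w₂) [x]
      simp only [List.length_cons, List.length_nil] at hn l1 l2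
      have c1 : res comp (res comp [x] (y :: v₂)) (res comp (z :: w₂) (y :: v₂)) =
          res comp (res comp [x] (z :: w₂)) (res comp (y :: v₂) (z :: w₂)) :=
        ih (by simp only [List.length_cons, List.length_nil]; omega) hx1 hv hw
      have c2 : res comp (res comp (z :: w₂) (y :: v₂)) (res comp [x] (y :: v₂)) =
          res comp (res comp (z :: w₂) [x]) (res comp (y :: v₂) [x]) :=
        ih (by simp only [List.length_cons, List.length_nil]; omega) hw hv hx1
      have c3 : res comp (res comp (x₂ :: u₃) (res comp (y :: v₂) [x]))
            (res comp (res comp (z :: w₂) [x]) (res comp (y :: v₂) [x])) =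
          res comp (res comp (x₂ :: u₃) (res comp (z :: w₂) [x]))
            (res comp (res comp (y :: v₂) [x]) (res comp (z :: w₂) [x])) :=
        ih (by simp only [List.length_cons, List.length_nil]; omega) hu₂ hvx hwx
      have c4 : res comp (res comp (y :: v₂) [x]) (res comp (z :: w₂) [x]) =
          res comp (res comp (y :: v₂) (z :: w₂)) (res comp [x] (z :: w₂)) :=
        ih (by simp only [List.length_cons, List.length_nil]; omega) hv hx1 hw
      calc res comp (res comp (x :: x₂ :: u₃) (y :: v₂)) (res comp (z :: w₂) (y :: v₂))
          = res comp (res comp [x] (y :: v₂)) (res comp (z :: w₂) (y :: v₂)) ++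
              res comp (res comp (x₂ :: u₃) (res comp (y :: v₂) [x]))
                (res comp (res comp (z :: w₂) (y :: v₂))
                  (res comp [x] (y :: v₂))) := by
            rw [show (x :: x₂ :: u₃) = [x] ++ (x₂ :: u₃) from rfl, res_append_left,
              res_append_left]
        _ = res comp (res comp [x] (z :: w₂)) (res comp (y :: v₂) (z :: w₂)) ++
              res comp (res comp (x₂ :: u₃) (res comp (z :: w₂) [x]))
                (res comp (res comp (y :: v₂) (z :: w₂))
                  (res comp [x] (z :: w₂))) := by
            rw [c1, c2, c3, c4]
        _ = res comp (res comp (x :: x₂ :: u₃) (z :: w₂))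
              (res comp (y :: v₂) (z :: w₂)) := by
            rw [show (x :: x₂ :: u₃) = [x] ++ (x₂ :: u₃) from rfl, res_append_left,
              res_append_left]

theorem Ctx.res_eq_nil_of_rel {l l' : List A} (h : Rel S T hd tl l l') :
    res comp l l' = [] := by
  obtain ⟨p, s, x, y, hxy⟩ := h
  rw [res_append_both]
  have hTy' : T (tl x y) = T y := C.ht x y hxy
  have hx_eq : x = comp (tl x y) y := C.cuniq (tl x y) y x hTy' hxy rfl
  have hx'_eq : hd x y = comp y (tl x y) := by
    have h2 := C.chd (f := tl x y) (g := y) hTy'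
    rwa [← hx_eq] at h2
  by_cases hyy : y = tl x y
  · have hx2 : x = comp y y := by rw [hx_eq, ← hyy]
    have hxx : hd x y = x := by rw [hx'_eq, ← hyy, ← hx2]
    rw [← hyy, hxx, res_self]
  · rw [res_cons_right, res1_cons_ne comp hyy, ← hx'_eq, ← hx_eq, res_cons_right,
      res1_cons_self, res1_cons_self, res_self]

theorem Ctx.rel_E {l l' : List A} (h : Rel S T hd tl l l') :
    res comp l l' = [] ∧ res comp l' l = [] :=
  ⟨C.res_eq_nil_of_rel h, C.res_eq_nil_of_rel (C.rel_symm h)⟩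

theorem Ctx.rtg_isW {t a : Λ} {l l' : List A}
    (h : ReflTransGen (Rel S T hd tl) l l') (hw : IsW S T t l a) : IsW S T t l' a := by
  induction h with
  | refl => exact hw
  | tail _ h2 ih => exact C.rel_isW h2 ih

theorem Ctx.E_trans {t a b c : Λ} {u v w : List A}
    (hu : IsW S T t u a) (hv : IsW S T t v b) (hw : IsW S T t w c)
    (e1 : res comp u v = [] ∧ res comp v u = [])
    (e2 : res comp v w = [] ∧ res comp w v = []) :
    res comp u w = [] ∧ res comp w u = [] := by
  constructor
  · have hc := C.cube (hd := hd) (tl := tl) (u.length + v.length + w.length)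
      le_rfl hu hv hw
    rw [e1.1, res_nil_left, e2.1, res_nil_right] at hc
    exact hc.symm
  · have hc := C.cube (hd := hd) (tl := tl) (w.length + v.length + u.length)
      le_rfl hw hv hu
    rw [e2.2, res_nil_left, e1.2, res_nil_right] at hc
    exact hc.symm

/-- Completeness of word reversing for the congruence. -/
theorem Ctx.complete {t a : Λ} {u v : List A}
    (h : ReflTransGen (Rel S T hd tl) u v) (hu : IsW S T t u a) :
    res comp u v = [] ∧ res comp v u = [] := by
  induction h with
  | refl => simp
  | tail h1 h2 ih =>
    have hb := C.rtg_isW h1 hu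
    have hc := C.rel_isW h2 hb
    exact C.E_trans hu hb hc ih (C.rel_E h2)

theorem Ctx.E_to_equiv {t a b : Λ} {u v : List A}
    (hu : IsW S T t u a) (hv : IsW S T t v b)
    (h1 : res comp u v = []) (h2 : res comp v u = []) :
    ReflTransGen (Rel S T hd tl) u v := by
  obtain ⟨e, _, _, hr⟩ := C.res_sound (comp := comp) hu hv
  rwa [h1, h2, List.append_nil, List.append_nil] at hr

/-- Right cancellation at the level of words. -/
theorem Ctx.cancel_right {t a b : Λ} {f x y : List A}
    (hu : IsW S T t (f ++ x) a) (hv : IsW S T t (f ++ y) b)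
    (h : ReflTransGen (Rel S T hd tl) (f ++ x) (f ++ y)) :
    ReflTransGen (Rel S T hd tl) x y := by
  have e := C.complete (comp := comp) h hu
  rw [res_append_both, res_append_both] at e
  obtain ⟨m, hf, hx⟩ := hu.append_split
  obtain ⟨m', hf', hy⟩ := hv.append_split
  obtain rfl := hf.src_unique hf'
  exact C.E_to_equiv hx hy e.1 e.2

/-- Universal property of the left-lcm at the level of words. -/
theorem Ctx.lcm_univ {d b c e e' : Λ} {f g u' v' : List A}
    (hf : IsW S T d f b) (hg : IsW S T d g c) (he : IsW S T b (res comp g f) e)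
    (hu' : IsW S T b u' e') (hv' : IsW S T c v' e')
    (h : ReflTransGen (Rel S T hd tl) (f ++ u') (g ++ v')) :
    ∃ w, IsW S T e w e' ∧
      ReflTransGen (Rel S T hd tl) (f ++ u') ((f ++ res comp g f) ++ w) := by
  have hz : IsW S T d (f ++ u') e' := hf.append hu'
  have hm : IsW S T d (f ++ res comp g f) e := hf.append he
  have hE : res comp (g ++ v') (f ++ u') = [] := (C.complete h hz).2
  have key : res comp (res comp g f) u' = [] := by
    have expand : res comp (g ++ v') (f ++ u') = res comp (res comp g f) u' ++
        res comp (res comp v' (res comp f g)) (res comp u' (res comp g f)) := by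
      rw [res_append_right, res_append_left, res_append_left]
    rw [expand] at hE
    exact (List.append_eq_nil_iff.mp hE).1
  have hmz : res comp (f ++ res comp g f) (f ++ u') = [] := by
    rw [res_append_both]; exact key
  obtain ⟨E, q1, q2, q3⟩ := C.res_sound (comp := comp) hz hm
  rw [hmz] at q1 q3
  obtain rfl := q1.nil_eq
  exact ⟨res comp (f ++ u') (f ++ res comp g f), q2, by simpa using q3⟩

end Main

section Mirror

variable {S T : A → Λ} {hd tl : A → A → A}

theorem IsW.rev {t s : Λ} {l : List A} (h : IsW S T t l s) : IsW T S s l.reverse t := by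
  induction h with
  | nil a => exact IsW.nil a
  | cons x h1 h2 ih =>
    rw [List.reverse_cons]
    refine ih.append ?_
    subst h1
    exact IsW.cons x rfl (IsW.nil _)

theorem Rel.rev {l l' : List A} (h : Rel S T hd tl l l') :
    Rel T S (fun a b => tl b a) (fun a b => hd b a) l.reverse l'.reverse := by
  obtain ⟨p, s, x, y, hxy⟩ := h
  have := Rel.mk (S := T) (T := S) (hd := fun a b => tl b a) (tl := fun a b => hd b a)
    s.reverse p.reverse y x hxy.symm
  simpa [List.reverse_append] using this

theorem rtg_rev {l l' : List A} (h : ReflTransGen (Rel S T hd tl) l l') :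
    ReflTransGen (Rel T S (fun a b => tl b a) (fun a b => hd b a))
      l.reverse l'.reverse :=
  ReflTransGen.lift (r := Rel S T hd tl) List.reverse (fun _ _ hr => hr.rev) _ _ h

end Mirror

theorem eqvGen_to_rtg {α : Type*} {r : α → α → Prop} (hs : Symmetric r) {a b : α}
    (h : Relation.EqvGen r a b) : ReflTransGen r a b := by
  induction h with
  | rel _ _ h => exact ReflTransGen.single h
  | refl => exact ReflTransGen.refl
  | symm _ _ _ ih =>
    haveI : Std.Symm r := ⟨fun _ _ h => hs h⟩
    exact Std.Symm.symm _ _ ih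
  | trans _ _ _ _ _ ih1 ih2 => exact ih1.trans ih2

end YBW


namespace QuiverData

open YBW CategoryTheory Relation

variable {Λ : Type u} {A : Type v} (Q : QuiverData Λ A)

/-- The list of arrows of a path, target-first. -/
def toL {a : Q.V} : ∀ {b : Q.V}, Quiver.Path a b → List A
  | _, Quiver.Path.nil => []
  | _, Quiver.Path.cons p e => e.1 :: toL p

@[simp] theorem toL_nil {a : Q.V} : Q.toL (Quiver.Path.nil (a := a)) = [] := rfl

@[simp] theorem toL_cons {a b c : Q.V} (p : Quiver.Path a b) (e : b ⟶ c) :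
    Q.toL (p.cons e) = e.1 :: Q.toL p := rfl

theorem toL_isW : ∀ {a b : Q.V} (p : Quiver.Path a b), IsW Q.src Q.tgt b (Q.toL p) a := by
  intro a b p
  induction p with
  | nil => exact IsW.nil _
  | cons p e ih => exact IsW.cons e.1 e.2.2 (by rw [e.2.1]; exact ih)

theorem toL_comp : ∀ {a b c : Q.V} (p : Quiver.Path a b) (q : Quiver.Path b c),
    Q.toL (p.comp q) = Q.toL q ++ Q.toL p := by
  intro a b c p q
  induction q with
  | nil => simp
  | cons q e ih => simp [ih]

theorem toL_comp' {a b c : Paths Q.V} (p : a ⟶ b) (q : b ⟶ c) :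
    Q.toL (p ≫ q) = Q.toL q ++ Q.toL p := Q.toL_comp p q

theorem toL_inj : ∀ {a b : Q.V} (p q : Quiver.Path a b), Q.toL p = Q.toL q → p = q := by
  intro a b p
  induction p with
  | nil =>
    intro q h
    cases q with
    | nil => rfl
    | cons q' e => exact absurd h (by simp)
  | cons p' e ih =>
    intro q h
    cases q with
    | nil => exact absurd h (by simp)
    | cons q' e' =>
      obtain ⟨x, hx1, hx2⟩ := e
      obtain ⟨x', hx1', hx2'⟩ := e'
      simp only [toL_cons, List.cons.injEq] at h
      obtain ⟨h1, h2⟩ := h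
      subst h1
      subst hx1
      subst hx1'
      rw [ih q' h2]

/-- Reconstruction of a path from a composable word. -/
def ofL : (l : List A) → ∀ {t s : Λ}, IsW Q.src Q.tgt t l s → Quiver.Path (Q.vert s) (Q.vert t)
  | [], _, _, h => by rw [h.nil_eq]; exact Quiver.Path.nil
  | x :: l, _, _, h => (ofL l h.cons_tail).cons ⟨x, rfl, h.cons_tgt⟩

theorem toL_ofL : ∀ (l : List A) {t s : Λ} (h : IsW Q.src Q.tgt t l s),
    Q.toL (Q.ofL l h) = l
  | [], t, s, h => by
    have := h.nil_eq
    subst this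
    rfl
  | x :: l, _, _, h => by
    show x :: Q.toL (Q.ofL l h.cons_tail) = x :: l
    rw [toL_ofL l h.cons_tail]

theorem splitL : ∀ (l₁ : List A) {a b : Q.V} (p : Quiver.Path a b) (l₂ : List A),
    Q.toL p = l₁ ++ l₂ →
    ∃ (m : Q.V) (p₂ : Quiver.Path a m) (p₁ : Quiver.Path m b),
      p = p₂.comp p₁ ∧ Q.toL p₁ = l₁ ∧ Q.toL p₂ = l₂ := by
  intro l₁
  induction l₁ with
  | nil => exact fun p l₂ h => ⟨_, p, Quiver.Path.nil, rfl, rfl, h⟩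
  | cons z l₁ ih =>
    intro a b p l₂ h
    cases p with
    | nil => exact absurd h (by simp)
    | cons p' e =>
      simp only [toL_cons, List.cons_append, List.cons.injEq] at h
      obtain ⟨h1, h2⟩ := h
      obtain ⟨m, p₂, p₁, rfl, hl1, hl2⟩ := ih p' l₂ h2
      exact ⟨m, p₂, p₁.cons e, rfl, by simp [hl1, h1], hl2⟩

@[simp] theorem toL_path2 {a m b : Λ} (x y : A)
    (hx : Q.src x = a) (hx' : Q.tgt x = m) (hy : Q.src y = m) (hy' : Q.tgt y = b) :
    Q.toL (Q.path2 x y hx hx' hy hy') = [y, x] := rfl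


section Cat

variable (hd tl : A → A → A)
variable (hs : ∀ x y, Q.tgt x = Q.src y → Q.src (hd x y) = Q.src x)
variable (hm : ∀ x y, Q.tgt x = Q.src y → Q.tgt (hd x y) = Q.src (tl x y))
variable (ht : ∀ x y, Q.tgt x = Q.src y → Q.tgt (tl x y) = Q.tgt y)

include hs hm ht

/-- Realizing a single rewriting step on lists inside the structure category. -/
theorem step {a b : Paths Q.V} (p : a ⟶ b) {l' : List A}
    (hr : YBW.Rel Q.src Q.tgt hd tl (Q.toL p) l') :
    ∃ q : a ⟶ b, Q.toL q = l' ∧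
      (Quotient.functor (Q.ybRel hd tl)).map p = (Quotient.functor (Q.ybRel hd tl)).map q := by
  obtain ⟨P, S₀, x, y, hxy, hl, hl'⟩ := hr.dest
  obtain ⟨m₁, p₂, p₁, rfl, hP, h2⟩ := Q.splitL P p (y :: x :: S₀) hl
  obtain ⟨m₂, p₃, pm, rfl, hpm, hS⟩ := Q.splitL [y, x] p₂ S₀ h2
  cases pm with
  | nil => exact absurd hpm (by simp)
  | cons pm' ey =>
    cases pm' with
    | nil => exact absurd hpm (by simp)
    | cons pm'' ex =>
      cases pm'' with
      | cons _ _ => exact absurd hpm (by simp)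
      | nil =>
        simp only [toL_cons, toL_nil, List.cons.injEq, and_true] at hpm
        obtain ⟨hey, hex⟩ := hpm
        obtain ⟨x0, hx1, hx2⟩ := ex
        obtain ⟨y0, hy1, hy2⟩ := ey
        dsimp only at hey hex
        subst hey
        subst hex
        subst hx1
        subst hx2
        subst hy2
        have hxy' : Q.tgt x0 = Q.src y0 := hy1.symm
        have hrel := QuiverData.ybRel.mk (Q := Q) (hd := hd) (tl := tl) x0 y0 hxy'
          (hs x0 y0 hxy') (hm x0 y0 hxy') (ht x0 y0 hxy')
        have mid : (Quotient.functor (Q.ybRel hd tl)).map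
            (Q.path2 x0 y0 rfl rfl hy1 rfl) =
            (Quotient.functor (Q.ybRel hd tl)).map
            (Q.path2 (hd x0 y0) (tl x0 y0) (hs x0 y0 hxy') rfl
              (hm x0 y0 hxy').symm (ht x0 y0 hxy')) :=
          CategoryTheory.Quotient.sound (Q.ybRel hd tl) hrel
        refine ⟨p₃.comp ((Q.path2 (hd x0 y0) (tl x0 y0) (hs x0 y0 hxy') rfl
          (hm x0 y0 hxy').symm (ht x0 y0 hxy')).comp p₁), ?_, ?_⟩
        · erw [hl', Q.toL_comp, Q.toL_comp, hP, hS, toL_path2]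
          simp
        · show (Quotient.functor (Q.ybRel hd tl)).map
              ((p₃ ≫ Q.path2 x0 y0 rfl rfl hy1 rfl) ≫ p₁) =
            (Quotient.functor (Q.ybRel hd tl)).map
              (p₃ ≫ (Q.path2 (hd x0 y0) (tl x0 y0) (hs x0 y0 hxy') rfl
                (hm x0 y0 hxy').symm (ht x0 y0 hxy') ≫ p₁))
          exact (congrArg (Quotient.functor (Q.ybRel hd tl)).map (Category.assoc _ _ _)).trans
            ((Functor.map_comp _ _ _).trans
              ((congrArg (fun t => (Quotient.functor (Q.ybRel hd tl)).map p₃ ≫ t)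
                ((Functor.map_comp _ _ _).trans
                  (congrArg (fun t => t ≫ (Quotient.functor (Q.ybRel hd tl)).map p₁) mid))).trans
                ((congrArg (fun t => (Quotient.functor (Q.ybRel hd tl)).map p₃ ≫ t)
                  (Functor.map_comp _ _ _).symm).trans
                  (Functor.map_comp _ _ _).symm)))

theorem bridge_fwd : ∀ {l l' : List A},
    Relation.ReflTransGen (YBW.Rel Q.src Q.tgt hd tl) l l' →
    ∀ {a b : Paths Q.V} (p : a ⟶ b), Q.toL p = l →
    ∃ q : a ⟶ b, Q.toL q = l' ∧
      (Quotient.functor (Q.ybRel hd tl)).map p = (Quotient.functor (Q.ybRel hd tl)).map q := by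
  intro l l' h
  induction h with
  | refl => exact fun p hp => ⟨p, hp, rfl⟩
  | tail h1 h2 ih =>
    intro a b p hp
    obtain ⟨q, hq, he⟩ := ih p hp
    rw [← hq] at h2
    obtain ⟨q', hq', he'⟩ := Q.step hd tl hs hm ht q h2
    exact ⟨q', hq', he.trans he'⟩

theorem bridge_eq {a b : Paths Q.V} (p q : a ⟶ b)
    (h : Relation.ReflTransGen (YBW.Rel Q.src Q.tgt hd tl) (Q.toL p) (Q.toL q)) :
    (Quotient.functor (Q.ybRel hd tl)).map p = (Quotient.functor (Q.ybRel hd tl)).map q := by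
  obtain ⟨q', hq', he⟩ := Q.bridge_fwd hd tl hs hm ht h p rfl
  rw [he, Q.toL_inj q' q hq']

theorem bridge_back
    (hsym : ∀ {l l' : List A}, YBW.Rel Q.src Q.tgt hd tl l l' →
      YBW.Rel Q.src Q.tgt hd tl l' l)
    {a b : Paths Q.V} (p q : a ⟶ b)
    (h : (Quotient.functor (Q.ybRel hd tl)).map p =
      (Quotient.functor (Q.ybRel hd tl)).map q) :
    Relation.ReflTransGen (YBW.Rel Q.src Q.tgt hd tl) (Q.toL p) (Q.toL q) := by
  have hE : Relation.EqvGen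
      (@CategoryTheory.HomRel.CompClosure _ _ (Q.ybRel hd tl) a b) p q :=
    Quot.eq.mp (show Quot.mk (@CategoryTheory.HomRel.CompClosure _ _ (Q.ybRel hd tl) a b) p
      = Quot.mk _ q from h)
  have main : ∀ {p q : a ⟶ b},
      @CategoryTheory.HomRel.CompClosure _ _ (Q.ybRel hd tl) a b p q →
      Relation.ReflTransGen (YBW.Rel Q.src Q.tgt hd tl) (Q.toL p) (Q.toL q) := by
    intro p q hc
    cases hc with
    | intro _ _ f m₁ m₂ g hrel =>
      cases hrel with
      | mk x y hxy h1 h2 h3 =>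
        apply Relation.ReflTransGen.single
        have base := YBW.Rel.mk (S := Q.src) (T := Q.tgt) (hd := hd) (tl := tl)
          (Q.toL g) (Q.toL f) x y hxy
        have e1 : Q.toL (f ≫ Q.path2 x y rfl rfl hxy.symm rfl ≫ g) =
            Q.toL g ++ y :: x :: Q.toL f := by
          show Q.toL (Quiver.Path.comp f (Quiver.Path.comp _ g)) = _
          erw [Q.toL_comp, Q.toL_comp, toL_path2]
          simp
        have e2 : Q.toL (f ≫ Q.path2 (hd x y) (tl x y) h1 rfl h2.symm h3 ≫ g) =
            Q.toL g ++ tl x y :: hd x y :: Q.toL f := by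
          show Q.toL (Quiver.Path.comp f (Quiver.Path.comp _ g)) = _
          erw [Q.toL_comp, Q.toL_comp, toL_path2]
          simp
        rw [e1, e2]
        exact base
  clear h
  induction hE with
  | rel _ _ hc => exact main hc
  | refl => exact Relation.ReflTransGen.refl
  | symm _ _ _ ih =>
    haveI : Std.Symm (YBW.Rel Q.src Q.tgt hd tl) := ⟨fun _ _ h => hsym h⟩
    exact Std.Symm.symm _ _ ih
  | trans _ _ _ _ _ ih1 ih2 => exact ih1.trans ih2

end Cat


end QuiverData

theorem structureCategory_leftOre
    {Λ : Type u} {A : Type v} (Q : QuiverData Λ A) (hd tl : A → A → A)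
    -- σ is a morphism of quivers
    (hs : ∀ x y, Q.tgt x = Q.src y → Q.src (hd x y) = Q.src x)
    (hm : ∀ x y, Q.tgt x = Q.src y → Q.tgt (hd x y) = Q.src (tl x y))
    (ht : ∀ x y, Q.tgt x = Q.src y → Q.tgt (tl x y) = Q.tgt y)
    -- the Yang–Baxter equation in components
    (yb1 : ∀ x y z, Q.tgt x = Q.src y → Q.tgt y = Q.src z →
      hd (hd x y) (hd (tl x y) z) = hd x (hd y z))
    (yb2 : ∀ x y z, Q.tgt x = Q.src y → Q.tgt y = Q.src z →
      tl (hd x y) (hd (tl x y) z) = hd (tl x (hd y z)) (tl y z))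
    (yb3 : ∀ x y z, Q.tgt x = Q.src y → Q.tgt y = Q.src z →
      tl (tl x y) z = tl (tl x (hd y z)) (tl y z))
    -- involutivity
    (inv1 : ∀ x y, Q.tgt x = Q.src y → hd (hd x y) (tl x y) = x)
    (inv2 : ∀ x y, Q.tgt x = Q.src y → tl (hd x y) (tl x y) = y)
    -- left-non-degeneracy
    (lnd : ∀ x : A, Function.Bijective fun y : {y : A // Q.src y = Q.tgt x} =>
      (⟨hd x y.1, hs x y.1 y.2.symm⟩ : {z : A // Q.src z = Q.src x}))
    -- right-non-degeneracy
    (rnd : ∀ y : A, Function.Bijective fun x : {x : A // Q.tgt x = Q.src y} =>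
      (⟨tl x.1 y, ht x.1 y x.2⟩ : {z : A // Q.tgt z = Q.tgt y}))
    :
    -- conclusion 1: the structure category is right-cancellative
    (∀ (a b c : Q.SC hd tl) (f : b ⟶ c) (x y : a ⟶ b), x ≫ f = y ≫ f → x = y) ∧
    -- conclusion 2: it is left-cancellative (so, with conclusion 1, cancellative)
    (∀ (a b c : Q.SC hd tl) (f : a ⟶ b) (x y : b ⟶ c), f ≫ x = f ≫ y → x = y) ∧
    -- conclusion 3: any two morphisms with the same target admit a left-lcm; in particular
    -- the structure category is a left-Ore category
    (∀ (b c d : Q.SC hd tl) (f : b ⟶ d) (g : c ⟶ d),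
      ∃ (a : Q.SC hd tl) (u : a ⟶ b) (v : a ⟶ c),
        u ≫ f = v ≫ g ∧
        ∀ (e : Q.SC hd tl) (u' : e ⟶ b) (v' : e ⟶ c),
          u' ≫ f = v' ≫ g → ∃ w : e ⟶ a, u' ≫ f = w ≫ (u ≫ f)) := by
  classical
  -- the complement operation coming from right-non-degeneracy
  set comp : A → A → A := fun f g =>
    if h : Q.tgt f = Q.tgt g then (Function.surjInv (rnd g).2 ⟨f, h⟩).1 else f with hcomp
  have ctl : ∀ f g, Q.tgt f = Q.tgt g → tl (comp f g) g = f := by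
    intro f g h
    have h2 := congrArg Subtype.val (Function.surjInv_eq (rnd g).2 ⟨f, h⟩)
    simp only [hcomp, dif_pos h]
    exact h2
  have ctgt : ∀ f g, Q.tgt f = Q.tgt g → Q.tgt (comp f g) = Q.src g := by
    intro f g h
    simp only [hcomp, dif_pos h]
    exact (Function.surjInv (rnd g).2 ⟨f, h⟩).2
  have cuniq : ∀ f g c, Q.tgt f = Q.tgt g → Q.tgt c = Q.src g → tl c g = f →
      c = comp f g := by
    intro f g c h hc he
    have key : (⟨c, hc⟩ : {x // Q.tgt x = Q.src g}) = Function.surjInv (rnd g).2 ⟨f, h⟩ := by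
      apply (rnd g).1
      exact (Subtype.ext he).trans (Function.surjInv_eq (rnd g).2 ⟨f, h⟩).symm
    simp only [hcomp, dif_pos h]
    exact congrArg Subtype.val key
  have C : YBW.Ctx Q.src Q.tgt hd tl comp :=
    ⟨hs, hm, ht, yb3, inv1, inv2, ctl, ctgt, cuniq⟩
  -- the mirrored complement operation coming from left-non-degeneracy
  set compM : A → A → A := fun f g =>
    if h : Q.src f = Q.src g then (Function.surjInv (lnd g).2 ⟨f, h⟩).1 else f with hcompM
  have ctlM : ∀ f g, Q.src f = Q.src g → hd g (compM f g) = f := by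
    intro f g h
    have h2 := congrArg Subtype.val (Function.surjInv_eq (lnd g).2 ⟨f, h⟩)
    simp only [hcompM, dif_pos h]
    exact h2
  have ctgtM : ∀ f g, Q.src f = Q.src g → Q.src (compM f g) = Q.tgt g := by
    intro f g h
    simp only [hcompM, dif_pos h]
    exact (Function.surjInv (lnd g).2 ⟨f, h⟩).2
  have cuniqM : ∀ f g c, Q.src f = Q.src g → Q.src c = Q.tgt g → hd g c = f →
      c = compM f g := by
    intro f g c h hc he
    have key : (⟨c, hc⟩ : {x // Q.src x = Q.tgt g}) = Function.surjInv (lnd g).2 ⟨f, h⟩ := by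
      apply (lnd g).1
      exact (Subtype.ext he).trans (Function.surjInv_eq (lnd g).2 ⟨f, h⟩).symm
    simp only [hcompM, dif_pos h]
    exact congrArg Subtype.val key
  have CM : YBW.Ctx Q.tgt Q.src (fun a b => tl b a) (fun a b => hd b a) compM := by
    refine ⟨?_, ?_, ?_, ?_, ?_, ?_, ctlM, ctgtM, cuniqM⟩
    · exact fun x y h => ht y x h.symm
    · exact fun x y h => (hm y x h.symm).symm
    · exact fun x y h => hs y x h.symm
    · exact fun x y z h1 h2 => (yb1 z y x h2.symm h1.symm).symm
    · exact fun x y h => inv2 y x h.symm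
    · exact fun x y h => inv1 y x h.symm
  have hsym : ∀ {l l' : List A}, YBW.Rel Q.src Q.tgt hd tl l l' →
      YBW.Rel Q.src Q.tgt hd tl l' l := fun h => C.rel_symm h
  refine ⟨?_, ?_, ?_⟩
  · -- right cancellation
    intro a b c f x y h
    obtain ⟨pf, rfl⟩ := (Quotient.functor (Q.ybRel hd tl)).map_surjective f
    obtain ⟨px, rfl⟩ := (Quotient.functor (Q.ybRel hd tl)).map_surjective x
    obtain ⟨py, rfl⟩ := (Quotient.functor (Q.ybRel hd tl)).map_surjective y
    rw [← Functor.map_comp, ← Functor.map_comp] at h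
    have hr := Q.bridge_back hd tl hs hm ht hsym _ _ h
    rw [Q.toL_comp', Q.toL_comp'] at hr
    have w1 : YBW.IsW Q.src Q.tgt c.as (Q.toL pf ++ Q.toL px) a.as := by
      rw [← Q.toL_comp']
      exact Q.toL_isW _
    have w2 : YBW.IsW Q.src Q.tgt c.as (Q.toL pf ++ Q.toL py) a.as := by
      rw [← Q.toL_comp']
      exact Q.toL_isW _
    exact Q.bridge_eq hd tl hs hm ht px py (C.cancel_right w1 w2 hr)
  · -- left cancellation, via the mirrored data
    intro a b c f x y h
    obtain ⟨pf, rfl⟩ := (Quotient.functor (Q.ybRel hd tl)).map_surjective f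
    obtain ⟨px, rfl⟩ := (Quotient.functor (Q.ybRel hd tl)).map_surjective x
    obtain ⟨py, rfl⟩ := (Quotient.functor (Q.ybRel hd tl)).map_surjective y
    rw [← Functor.map_comp, ← Functor.map_comp] at h
    have hr := Q.bridge_back hd tl hs hm ht hsym _ _ h
    rw [Q.toL_comp', Q.toL_comp'] at hr
    have hrM := YBW.rtg_rev hr
    rw [List.reverse_append, List.reverse_append] at hrM
    have w1 : YBW.IsW Q.tgt Q.src a.as
        ((Q.toL pf).reverse ++ (Q.toL px).reverse) c.as := by
      rw [← List.reverse_append, ← Q.toL_comp']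
      exact (Q.toL_isW _).rev
    have w2 : YBW.IsW Q.tgt Q.src a.as
        ((Q.toL pf).reverse ++ (Q.toL py).reverse) c.as := by
      rw [← List.reverse_append, ← Q.toL_comp']
      exact (Q.toL_isW _).rev
    have hcanM := CM.cancel_right w1 w2 hrM
    have hcan := YBW.rtg_rev hcanM
    rw [List.reverse_reverse, List.reverse_reverse] at hcan
    exact Q.bridge_eq hd tl hs hm ht px py hcan
  · -- existence of left-lcms
    intro b c d f g
    obtain ⟨pf, rfl⟩ := (Quotient.functor (Q.ybRel hd tl)).map_surjective f
    obtain ⟨pg, rfl⟩ := (Quotient.functor (Q.ybRel hd tl)).map_surjective g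
    have hf : YBW.IsW Q.src Q.tgt d.as (Q.toL pf) b.as := Q.toL_isW pf
    have hg : YBW.IsW Q.src Q.tgt d.as (Q.toL pg) c.as := Q.toL_isW pg
    obtain ⟨e, h1, h2, h3⟩ := C.res_sound hf hg
    refine ⟨(Quotient.functor (Q.ybRel hd tl)).obj (Q.vert e),
      (Quotient.functor (Q.ybRel hd tl)).map (Q.ofL _ h1),
      (Quotient.functor (Q.ybRel hd tl)).map (Q.ofL _ h2), ?_, ?_⟩
    · refine (Functor.map_comp _ _ _).symm.trans
        ((Q.bridge_eq hd tl hs hm ht _ _ ?_).trans (Functor.map_comp _ _ _))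
      exact (congrArg₂ (Relation.ReflTransGen _)
        ((Q.toL_comp' _ _).trans (congrArg (Q.toL pf ++ ·) (Q.toL_ofL _ h1)))
        ((Q.toL_comp' _ _).trans (congrArg (Q.toL pg ++ ·) (Q.toL_ofL _ h2)))).mpr h3
    · intro E u' v' h'
      obtain ⟨pu', rfl⟩ := (Quotient.functor (Q.ybRel hd tl)).map_surjective u'
      obtain ⟨pv', rfl⟩ := (Quotient.functor (Q.ybRel hd tl)).map_surjective v'
      rw [← Functor.map_comp, ← Functor.map_comp] at h'
      have hr := Q.bridge_back hd tl hs hm ht hsym _ _ h'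
      rw [Q.toL_comp', Q.toL_comp'] at hr
      obtain ⟨w, hwIsW, hwRTG⟩ :=
        C.lcm_univ hf hg h1 (Q.toL_isW pu') (Q.toL_isW pv') hr
      refine ⟨(Quotient.functor (Q.ybRel hd tl)).map (Q.ofL w hwIsW), ?_⟩
      refine (Q.bridge_eq hd tl hs hm ht _ _ ?_).trans
        ((Functor.map_comp _ _ _).trans (congrArg (_ ≫ ·) (Functor.map_comp _ _ _)))
      exact (congrArg₂ (Relation.ReflTransGen _) (Q.toL_comp' _ _)
        ((Q.toL_comp' _ _).trans (congrArg₂ (· ++ ·)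
          ((Q.toL_comp' _ _).trans (congrArg (Q.toL pf ++ ·) (Q.toL_ofL _ h1)))
          (Q.toL_ofL _ hwIsW)))).mpr hwRTG
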